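/- Let v_I ∈ ℝ^{n×p_I}, v_J ∈ ℝ^{n×p_J} with v_II and v_JJ positive definite. Define M(ρ) := [I_{p_I}, 0]·G(ρ)⁻¹·[v_I, v_J]⊤ ∈ ℝ^{p_I×n} (so that the mutual-learning estimator satisfies θ̂_I(ρ) = M(ρ)Y for every Y ∈ ℝⁿ). Then the map ρ ↦ diag(M(ρ)M(ρ)⊤) ∈ ℝ^{p_I} is differentiable at ρ = 0 with derivative 2·diag((v_II⁻¹v_IJv_JJ⁻¹v_JI − I_{p_I})·v_II⁻¹). Consequently, if Y = μ + ε̄ where ε̄ ∈ ℝⁿ is a random vector with mean zero and covariance matrix σ̄²·I_n for some σ̄² > 0 and μ ∈ ℝⁿ is fixed, then the vector of coordinatewise variances of θ̂_I(ρ) = M(ρ)Y equals σ̄²·diag(M(ρ)M(ρ)⊤), and its derivative at ρ = 0 equals 2σ̄²·diag((v_II⁻¹v_IJv_JJ⁻¹v_JI − I_{p_I})·v_II⁻¹). -/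

import Mathlib

open Matrix MeasureTheory ProbabilityTheory

namespace MetaFusionStmt12

/-- The block matrix `G(ρ) = [[(1+ρ)v_II, −ρ v_IJ], [−ρ v_JI, (1+ρ)v_JJ]]`. -/
def mlG {n pI pJ : ℕ} (vI : Matrix (Fin n) (Fin pI) ℝ)
    (vJ : Matrix (Fin n) (Fin pJ) ℝ) (ρ : ℝ) :
    Matrix (Fin pI ⊕ Fin pJ) (Fin pI ⊕ Fin pJ) ℝ :=
  Matrix.fromBlocks ((1 + ρ) • (vIᵀ * vI)) ((-ρ) • (vIᵀ * vJ))
    ((-ρ) • (vJᵀ * vI)) ((1 + ρ) • (vJᵀ * vJ))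

/-- `M(ρ) = [I_{p_I}, 0] G(ρ)⁻¹ [v_I, v_J]ᵀ ∈ ℝ^{p_I × n}`, so that the mutual-learning
estimator is `θ̂_I(ρ) = M(ρ) Y`. -/
noncomputable def mlM {n pI pJ : ℕ} (vI : Matrix (Fin n) (Fin pI) ℝ)
    (vJ : Matrix (Fin n) (Fin pJ) ℝ) (ρ : ℝ) : Matrix (Fin pI) (Fin n) ℝ :=
  ((mlG vI vJ ρ)⁻¹ * (Matrix.fromCols vI vJ)ᵀ).submatrix Sum.inl id

set_option synthInstance.maxHeartbeats 1000000
set_option maxHeartbeats 1000000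
set_option maxRecDepth 4000

attribute [local instance] Matrix.linftyOpNormedAddCommGroup Matrix.linftyOpNormedSpace
  Matrix.linftyOpNormedRing Matrix.linftyOpNormedAlgebra

private lemma var_lemma {Ω : Type} [MeasurableSpace Ω] (P : Measure Ω) [IsProbabilityMeasure P]
    {n : ℕ} (c : Fin n → ℝ) (m0 : ℝ) (ε : Ω → Fin n → ℝ) (sbar2 : ℝ)
    (hmeas : ∀ i, Measurable fun ω => ε ω i)
    (hint : ∀ i, Integrable (fun ω => ε ω i) P)
    (hintmul : ∀ i j, Integrable (fun ω => ε ω i * ε ω j) P)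
    (hmean : ∀ i, ∫ ω, ε ω i ∂P = 0)
    (hcov : ∀ i j, ∫ ω, ε ω i * ε ω j ∂P = if i = j then sbar2 else 0) :
    variance (fun ω => m0 + ∑ k, c k * ε ω k) P = sbar2 * ∑ k, c k * c k := by
  have hXmeas : Measurable (fun ω => ∑ k, c k * ε ω k) :=
    Finset.measurable_sum _ fun k _ => (hmeas k).const_mul (c k)
  have hXint : Integrable (fun ω => ∑ k, c k * ε ω k) P :=
    integrable_finset_sum _ fun k _ => (hint k).const_mul (c k)
  have hXmean : ∫ ω, ∑ k, c k * ε ω k ∂P = 0 := by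
    rw [integral_finset_sum _ (fun k _ => (hint k).const_mul (c k))]
    simp [integral_const_mul, hmean]
  have hXXeq : ∀ ω : Ω, (∑ k, c k * ε ω k) * (∑ k, c k * ε ω k)
      = ∑ k, ∑ l, c k * c l * (ε ω k * ε ω l) := by
    intro ω
    rw [Finset.sum_mul_sum]
    congr 1; funext k; congr 1; funext l; ring
  have hXXint : Integrable (fun ω => (∑ k, c k * ε ω k) * (∑ k, c k * ε ω k)) P := by
    rw [show (fun ω => (∑ k, c k * ε ω k) * (∑ k, c k * ε ω k))
        = fun ω => ∑ k, ∑ l, c k * c l * (ε ω k * ε ω l) from funext hXXeq]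
    exact integrable_finset_sum _ fun k _ =>
      integrable_finset_sum _ fun l _ => (hintmul k l).const_mul _
  have hXXmean : ∫ ω, (∑ k, c k * ε ω k) * (∑ k, c k * ε ω k) ∂P
      = sbar2 * ∑ k, c k * c k := by
    rw [show (fun ω => (∑ k, c k * ε ω k) * (∑ k, c k * ε ω k))
        = fun ω => ∑ k, ∑ l, c k * c l * (ε ω k * ε ω l) from funext hXXeq]
    rw [integral_finset_sum _ fun k _ =>
      integrable_finset_sum _ fun l _ => (hintmul k l).const_mul _]
    have hk : ∀ k : Fin n, ∫ ω, ∑ l, c k * c l * (ε ω k * ε ω l) ∂P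
        = sbar2 * (c k * c k) := by
      intro k
      rw [integral_finset_sum _ fun l _ => (hintmul k l).const_mul _]
      have hl : ∀ l : Fin n, ∫ ω, c k * c l * (ε ω k * ε ω l) ∂P
          = if k = l then sbar2 * (c k * c k) else 0 := by
        intro l
        rw [integral_const_mul, hcov k l]
        by_cases h : k = l
        · subst h; simp; ring
        · simp [h]
      rw [Finset.sum_congr rfl fun l _ => hl l]
      simp
    rw [Finset.sum_congr rfl fun k _ => hk k, ← Finset.mul_sum]
  have hY2 : MemLp (fun ω => m0 + ∑ k, c k * ε ω k) 2 P := by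
    apply (memLp_two_iff_integrable_sq
      ((measurable_const.add hXmeas).aestronglyMeasurable)).2
    have e : (fun ω => (m0 + ∑ k, c k * ε ω k) ^ 2)
        = fun ω => m0 ^ 2 + ((2 * m0) * ∑ k, c k * ε ω k
          + (∑ k, c k * ε ω k) * (∑ k, c k * ε ω k)) := by
      funext ω; ring
    show Integrable (fun ω => (m0 + ∑ k, c k * ε ω k) ^ 2) P
    rw [e]
    exact (integrable_const _).add ((hXint.const_mul _).add hXXint)
  rw [variance_eq_sub hY2]
  have e : ((fun ω => m0 + ∑ k, c k * ε ω k) ^ 2)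
      = fun ω => m0 ^ 2 + ((2 * m0) * ∑ k, c k * ε ω k
        + (∑ k, c k * ε ω k) * (∑ k, c k * ε ω k)) := by
    funext ω; simp only [Pi.pow_apply]; ring
  have hXint2 : Integrable (fun ω => 2 * m0 * ∑ k, c k * ε ω k) P := by
    exact hXint.const_mul _
  have hIg : Integrable (fun ω => 2 * m0 * ∑ k, c k * ε ω k
      + (∑ k, c k * ε ω k) * (∑ k, c k * ε ω k)) P := by
    exact hXint2.add hXXint
  have hXmean2 : ∫ ω, 2 * m0 * ∑ k, c k * ε ω k ∂P = 0 := by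
    rw [integral_const_mul, hXmean, mul_zero]
  have h1 : P[(fun ω => m0 + ∑ k, c k * ε ω k) ^ 2]
      = m0 ^ 2 + sbar2 * ∑ k, c k * c k := by
    rw [e, integral_add (integrable_const _) hIg,
      integral_add hXint2 hXXint, hXmean2, hXXmean, integral_const]
    simp
  have h2 : P[fun ω => m0 + ∑ k, c k * ε ω k] = m0 := by
    rw [integral_add (integrable_const _) hXint, hXmean, integral_const]
    simp
  rw [h1, h2]
  ring

private lemma part1 {n pI pJ : ℕ} (vI : Matrix (Fin n) (Fin pI) ℝ) (vJ : Matrix (Fin n) (Fin pJ) ℝ)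
    (hI : (vIᵀ * vI).PosDef) (hJ : (vJᵀ * vJ).PosDef) :
    HasDerivAt (fun ρ => Matrix.diag (mlM vI vJ ρ * (mlM vI vJ ρ)ᵀ))
      ((2 : ℝ) • Matrix.diag
        (((vIᵀ * vI)⁻¹ * (vIᵀ * vJ) * (vJᵀ * vJ)⁻¹ * (vJᵀ * vI) - 1) * (vIᵀ * vI)⁻¹)) 0 := by
  set A := vIᵀ * vI with hA
  set D := vJᵀ * vJ with hD
  set B := vIᵀ * vJ with hB
  set C := vJᵀ * vI with hC
  set G0 : Matrix (Fin pI ⊕ Fin pJ) (Fin pI ⊕ Fin pJ) ℝ := Matrix.fromBlocks A 0 0 D with hG0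
  set G1 : Matrix (Fin pI ⊕ Fin pJ) (Fin pI ⊕ Fin pJ) ℝ := Matrix.fromBlocks A (-B) (-C) D with hG1
  have hGfun : ∀ ρ : ℝ, mlG vI vJ ρ = G0 + ρ • G1 := by
    intro ρ
    show Matrix.fromBlocks ((1 + ρ) • A) ((-ρ) • B) ((-ρ) • C) ((1 + ρ) • D) = _
    ext (i|i) (k|k) <;>
      simp [Matrix.fromBlocks, hG0, hG1, Matrix.smul_apply] <;> ring
  have huA : IsUnit A.det := hI.det_pos.ne'.isUnit
  have huD : IsUnit D.det := hJ.det_pos.ne'.isUnit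
  have hAiA : A⁻¹ * A = 1 := Matrix.nonsing_inv_mul A huA
  have hAAi : A * A⁻¹ = 1 := Matrix.mul_nonsing_inv A huA
  have hDiD : D⁻¹ * D = 1 := Matrix.nonsing_inv_mul D huD
  have hDDi : D * D⁻¹ = 1 := Matrix.mul_nonsing_inv D huD
  have hG : HasDerivAt (fun ρ : ℝ => G0 + ρ • G1) G1 0 := by
    have h := ((hasDerivAt_id (0:ℝ)).smul_const G1).const_add G0
    rw [one_smul] at h; exact h
  have hu : IsUnit G0 := by
    rw [Matrix.isUnit_iff_isUnit_det, hG0, Matrix.det_fromBlocks_zero₂₁]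
    exact huA.mul huD
  obtain ⟨u, hu0⟩ := hu
  have hinv : HasDerivAt (fun ρ : ℝ => (mlG vI vJ ρ)⁻¹) (-(G0⁻¹ * G1 * G0⁻¹)) 0 := by
    simp only [hGfun]
    have h0 : HasDerivAt (fun ρ : ℝ => Ring.inverse (G0 + ρ • G1))
        ((-ContinuousLinearMap.mulLeftRight ℝ _ ↑u⁻¹ ↑u⁻¹) G1) 0 := by
      have hg := hasFDerivAt_ringInverse (𝕜 := ℝ)
        (R := Matrix (Fin pI ⊕ Fin pJ) (Fin pI ⊕ Fin pJ) ℝ) u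
      have he : (fun ρ : ℝ => G0 + ρ • G1) 0 = ↑u := by rw [← hu0]; simp
      rw [← he] at hg
      exact hg.comp_hasDerivAt 0 hG
    have hG0u : G0⁻¹ = (↑u⁻¹ : Matrix _ _ ℝ) := by
      rw [Matrix.nonsing_inv_eq_ringInverse, ← hu0, Ring.inverse_unit]
    have hfn : (fun ρ : ℝ => (G0 + ρ • G1)⁻¹) = fun ρ : ℝ => Ring.inverse (G0 + ρ • G1) := by
      funext ρ; exact Matrix.nonsing_inv_eq_ringInverse _
    rw [hfn]
    convert h0 using 1
    rw [ContinuousLinearMap.neg_apply, ContinuousLinearMap.mulLeftRight_apply, hG0u]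
  -- block formula for G0⁻¹
  have hG0inv : G0⁻¹ = Matrix.fromBlocks A⁻¹ 0 0 D⁻¹ := by
    apply Matrix.inv_eq_left_inv
    rw [hG0, Matrix.fromBlocks_multiply]
    simp [hAiA, hDiD, Matrix.fromBlocks_one]
  set Dm : Matrix (Fin pI ⊕ Fin pJ) (Fin pI ⊕ Fin pJ) ℝ := -(G0⁻¹ * G1 * G0⁻¹) with hDm
  have hDmblocks : Dm = Matrix.fromBlocks (-A⁻¹) (A⁻¹ * B * D⁻¹) (D⁻¹ * C * A⁻¹) (-D⁻¹) := by
    rw [hDm, hG0inv, hG1, Matrix.fromBlocks_multiply, Matrix.fromBlocks_multiply]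
    simp only [Matrix.mul_zero, Matrix.zero_mul, Matrix.mul_neg, Matrix.neg_mul, add_zero,
      zero_add, Matrix.mul_one]
    rw [Matrix.fromBlocks_neg]
    congr 1 <;> simp [hAiA, hDiD, hAAi, hDDi, Matrix.mul_assoc]
  set Ct := (Matrix.fromCols vI vJ)ᵀ with hCt
  have hCtRows : Ct = Matrix.fromRows vIᵀ vJᵀ := Matrix.transpose_fromCols vI vJ
  -- entrywise derivatives of the inverse
  have hentry : ∀ (a b : Fin pI ⊕ Fin pJ),
      HasDerivAt (fun ρ : ℝ => ((mlG vI vJ ρ)⁻¹) a b) (Dm a b) 0 := by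
    intro a b
    let L : Matrix (Fin pI ⊕ Fin pJ) (Fin pI ⊕ Fin pJ) ℝ →ₗ[ℝ] ℝ :=
      { toFun := fun X => X a b, map_add' := fun _ _ => rfl, map_smul' := fun _ _ => rfl }
    exact (L.toContinuousLinearMap.hasFDerivAt.comp_hasDerivAt 0 hinv)
  set M'0 : Matrix (Fin pI) (Fin n) ℝ := (Dm * Ct).submatrix Sum.inl id with hM'0def
  have hMentry : ∀ (j : Fin pI) (k : Fin n),
      HasDerivAt (fun ρ : ℝ => mlM vI vJ ρ j k) (M'0 j k) 0 := by
    intro j k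
    have hfn : (fun ρ : ℝ => mlM vI vJ ρ j k)
        = fun ρ : ℝ => ∑ s, ((mlG vI vJ ρ)⁻¹) (Sum.inl j) s * Ct s k := by
      funext ρ
      simp [mlM, Matrix.mul_apply, Matrix.submatrix_apply, hCt]
    rw [hfn]
    have h := HasDerivAt.fun_sum
      (fun s (_ : s ∈ Finset.univ) => (hentry (Sum.inl j) s).mul_const (Ct s k))
    have hv : M'0 j k = ∑ s, Dm (Sum.inl j) s * Ct s k := by
      rw [hM'0def]; simp [Matrix.mul_apply, Matrix.submatrix_apply]
    rw [hv]; exact h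
  have hM0 : mlM vI vJ 0 = A⁻¹ * vIᵀ := by
    rw [mlM, hGfun 0]
    simp only [zero_smul, add_zero]
    rw [hG0inv, ← hCt, hCtRows, Matrix.fromBlocks_mul_fromRows]
    ext j k
    simp [Matrix.submatrix_apply]
  have hM'0 : M'0 = A⁻¹ * B * D⁻¹ * vJᵀ - A⁻¹ * vIᵀ := by
    rw [hM'0def, hDmblocks, hCtRows, Matrix.fromBlocks_mul_fromRows]
    ext j k
    simp [Matrix.submatrix_apply, Matrix.sub_apply, Matrix.neg_apply, Matrix.add_apply]
    ring
  have hAT : Aᵀ = A := by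
    rw [hA, Matrix.transpose_mul, Matrix.transpose_transpose]
  have hAiT : (A⁻¹)ᵀ = A⁻¹ := by
    rw [Matrix.transpose_nonsing_inv, hAT]
  have hkey : M'0 * (mlM vI vJ 0)ᵀ = (A⁻¹ * B * D⁻¹ * C - 1) * A⁻¹ := by
    rw [hM0, hM'0, Matrix.transpose_mul, Matrix.transpose_transpose, hAiT]
    simp only [Matrix.sub_mul, Matrix.one_mul, ← Matrix.mul_assoc]
    rw [Matrix.mul_assoc (A⁻¹ * B * D⁻¹) vJᵀ vI, ← hC,
      Matrix.mul_assoc A⁻¹ vIᵀ vI, ← hA, hAiA, Matrix.one_mul]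
  rw [hasDerivAt_pi]
  intro j
  have h1 : HasDerivAt (fun ρ : ℝ => ∑ k, mlM vI vJ ρ j k * mlM vI vJ ρ j k)
      (∑ k, (M'0 j k * mlM vI vJ 0 j k + mlM vI vJ 0 j k * M'0 j k)) 0 :=
    HasDerivAt.fun_sum fun k _ => (hMentry j k).mul (hMentry j k)
  have hfn : (fun ρ : ℝ => Matrix.diag (mlM vI vJ ρ * (mlM vI vJ ρ)ᵀ) j)
      = fun ρ : ℝ => ∑ k, mlM vI vJ ρ j k * mlM vI vJ ρ j k := by
    funext ρ
    simp [Matrix.diag, Matrix.mul_apply]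
  rw [hfn]
  refine h1.congr_deriv (Eq.symm ?_)
  rw [← hkey]
  have : (M'0 * (mlM vI vJ 0)ᵀ) j j = ∑ k, M'0 j k * mlM vI vJ 0 j k := by
    simp [Matrix.mul_apply]
  simp only [Pi.smul_apply, Matrix.diag_apply, smul_eq_mul, this, Finset.mul_sum]
  congr 1
  funext k
  ring

/-- With `v_II`, `v_JJ` positive definite, the map
`ρ ↦ diag(M(ρ) M(ρ)ᵀ)` is differentiable at `0` with derivative
`2 diag((v_II⁻¹ v_IJ v_JJ⁻¹ v_JI − I) v_II⁻¹)`. Consequently, if `Y = μ + ε̄` where `ε̄`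
has mean zero and covariance `σ̄² I_n`, then the coordinatewise variances of
`θ̂_I(ρ) = M(ρ) Y` equal `σ̄² diag(M(ρ) M(ρ)ᵀ)` and their derivative at `0` equals
`2σ̄² diag((v_II⁻¹ v_IJ v_JJ⁻¹ v_JI − I) v_II⁻¹)`. -/
theorem aleatoric_variance_deriv_at_zero
    (n pI pJ : ℕ) (vI : Matrix (Fin n) (Fin pI) ℝ) (vJ : Matrix (Fin n) (Fin pJ) ℝ)
    (hI : (vIᵀ * vI).PosDef) (hJ : (vJᵀ * vJ).PosDef) :
    HasDerivAt (fun ρ => Matrix.diag (mlM vI vJ ρ * (mlM vI vJ ρ)ᵀ))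
      ((2 : ℝ) • Matrix.diag
        (((vIᵀ * vI)⁻¹ * (vIᵀ * vJ) * (vJᵀ * vJ)⁻¹ * (vJᵀ * vI) - 1) * (vIᵀ * vI)⁻¹)) 0 ∧
    ∀ {Ω : Type} [inst : MeasurableSpace Ω] (P : Measure Ω) [IsProbabilityMeasure P]
      (μ : Fin n → ℝ) (ε : Ω → Fin n → ℝ) (sbar2 : ℝ), 0 < sbar2 →
      (∀ i, Measurable fun ω => ε ω i) →
      (∀ i, Integrable (fun ω => ε ω i) P) →
      (∀ i j, Integrable (fun ω => ε ω i * ε ω j) P) →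
      (∀ i, ∫ ω, ε ω i ∂P = 0) →
      (∀ i j, ∫ ω, ε ω i * ε ω j ∂P = if i = j then sbar2 else 0) →
      (∀ ρ (j : Fin pI),
        variance (fun ω => (mlM vI vJ ρ *ᵥ (μ + ε ω)) j) P
          = sbar2 * Matrix.diag (mlM vI vJ ρ * (mlM vI vJ ρ)ᵀ) j) ∧
      HasDerivAt (fun ρ => fun j : Fin pI =>
          variance (fun ω => (mlM vI vJ ρ *ᵥ (μ + ε ω)) j) P)
        ((2 * sbar2) • Matrix.diag
          (((vIᵀ * vI)⁻¹ * (vIᵀ * vJ) * (vJᵀ * vJ)⁻¹ * (vJᵀ * vI) - 1) * (vIᵀ * vI)⁻¹)) 0 := by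
  refine ⟨part1 vI vJ hI hJ, ?_⟩
  intro Ω inst P instP μ ε sbar2 hs hmeas hint hintmul hmean hcov
  have hvar : ∀ (ρ : ℝ) (j : Fin pI),
      variance (fun ω => (mlM vI vJ ρ *ᵥ (μ + ε ω)) j) P
        = sbar2 * Matrix.diag (mlM vI vJ ρ * (mlM vI vJ ρ)ᵀ) j := by
    intro ρ j
    have hfun : (fun ω => (mlM vI vJ ρ *ᵥ (μ + ε ω)) j)
        = fun ω => (mlM vI vJ ρ *ᵥ μ) j + ∑ k, mlM vI vJ ρ j k * ε ω k := by
      funext ω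
      rw [Matrix.mulVec_add]
      simp [Matrix.mulVec, dotProduct]
    rw [hfun, var_lemma P _ _ ε sbar2 hmeas hint hintmul hmean hcov]
    congr 1
  refine ⟨fun ρ j => hvar ρ j, ?_⟩
  have hfn : (fun ρ => fun j : Fin pI =>
        variance (fun ω => (mlM vI vJ ρ *ᵥ (μ + ε ω)) j) P)
      = fun ρ => sbar2 • Matrix.diag (mlM vI vJ ρ * (mlM vI vJ ρ)ᵀ) := by
    funext ρ j
    rw [hvar ρ j]
    rfl
  rw [hfn]
  have h := (part1 vI vJ hI hJ).const_smul sbar2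
  refine h.congr_deriv (Eq.symm ?_)
  rw [smul_smul, mul_comm]


end MetaFusionStmt12
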